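/- For every real number x, the set of primes p such that every prime factor of p² − 1 is at most x is finite and has cardinality at most 3·7^{1+2π(x)}. -/

import Mathlib

set_option linter.unusedSectionVars false
set_option linter.unusedVariables false

open Pell Pell.Solution₁

namespace Stormer

variable {d : ℤ}

/-- y-coordinate of `a ^ n` as a natural number. -/
noncomputable def yN (a : Solution₁ d) (n : ℕ) : ℕ := ((a ^ n).y).natAbs

lemma natCast_pow_dvd_iff {q e : ℕ} {z : ℤ} : (q : ℤ) ^ e ∣ z ↔ q ^ e ∣ z.natAbs := by
  rw [← Int.natAbs_dvd_natAbs, Int.natAbs_pow, Int.natAbs_natCast]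

section seq

variable {a : Solution₁ d} (hd : 0 < d) (hx : 1 < a.x) (hy : 0 < a.y)

lemma x_pow_add (m n : ℕ) :
    (a ^ (m + n)).x = (a ^ m).x * (a ^ n).x + d * ((a ^ m).y * (a ^ n).y) := by
  rw [pow_add, x_mul]

lemma y_pow_add (m n : ℕ) :
    (a ^ (m + n)).y = (a ^ m).x * (a ^ n).y + (a ^ m).y * (a ^ n).x := by
  rw [pow_add, y_mul]

include hx in
lemma x_pow_pos' (n : ℕ) : 0 < (a ^ n).x := x_pow_pos (by linarith) n

include hx hy in
lemma y_pow_pos {n : ℕ} (hn : 0 < n) : 0 < (a ^ n).y := by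
  obtain ⟨k, rfl⟩ := Nat.exists_eq_add_of_lt hn
  simpa using y_pow_succ_pos (by linarith) hy k

include hx hy in
lemma y_pow_nonneg (n : ℕ) : 0 ≤ (a ^ n).y := by
  cases n with
  | zero => simp
  | succ k => exact (y_pow_pos hx hy k.succ_pos).le

include hx hy in
lemma yN_pos {n : ℕ} (hn : 0 < n) : 0 < yN a n := by
  have := y_pow_pos hx hy hn
  simp only [yN]
  omega

include hx hy in
lemma yN_cast {n : ℕ} : (yN a n : ℤ) = (a ^ n).y := by
  rw [yN, Int.natAbs_of_nonneg (y_pow_nonneg hx hy n)]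

include hd hx hy in
lemma y_pow_le {m n : ℕ} (h : m ≤ n) :
    2 ^ (n - m) * (a ^ m).y ≤ (a ^ n).y := by
  induction n, h using Nat.le_induction with
  | base => simp
  | succ n hmn ih =>
    have h1 : (a ^ (n + 1)).y = (a ^ n).x * a.y + (a ^ n).y * a.x := by
      simpa using y_pow_add n 1
    have h2 : 0 < (a ^ n).x := x_pow_pos' hx n
    have h3 : 0 ≤ (a ^ n).y := y_pow_nonneg hx hy n
    have key : 2 * (a ^ n).y ≤ (a ^ (n + 1)).y := by
      rw [h1]
      nlinarith
    have : n + 1 - m = (n - m) + 1 := by omega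
    rw [this, pow_succ]
    calc 2 ^ (n - m) * 2 * (a ^ m).y = 2 * (2 ^ (n - m) * (a ^ m).y) := by ring
    _ ≤ 2 * (a ^ n).y := by linarith
    _ ≤ (a ^ (n + 1)).y := key

/-- Key congruence: expansion of `a^(m*t)` modulo powers of `(a^m).y`. -/
lemma key_congruence (a : Solution₁ d) (m t : ℕ) :
    ∃ c c' : ℤ,
      (a ^ (m * t)).x = (a ^ m).x ^ t + c * (a ^ m).y ^ 2 ∧
      (a ^ (m * t)).y = (t : ℤ) * (a ^ m).x ^ (t - 1) * (a ^ m).y + c' * (a ^ m).y ^ 3 := by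
  set X := (a ^ m).x with hX
  set Y := (a ^ m).y with hY
  induction t with
  | zero => exact ⟨0, 0, by simp⟩
  | succ t ih =>
    obtain ⟨c, c', h1, h2⟩ := ih
    have aux : (t : ℤ) * X ^ (t - 1) * X = (t : ℤ) * X ^ t := by
      cases t with
      | zero => simp
      | succ s => rw [Nat.succ_sub_one, pow_succ]; ring
    refine ⟨c * X + d * t * X ^ (t - 1) + d * c' * Y ^ 2, c' * X + c + (t:ℤ) * 0 , ?_, ?_⟩
    · have := x_pow_add (a := a) (m * t) m
      rw [Nat.mul_succ] at *
      rw [this, h1, h2]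
      ring
    · have := y_pow_add (a := a) (m * t) m
      rw [Nat.mul_succ] at *
      rw [this, h1, h2, Nat.succ_sub_one]
      push_cast
      linear_combination Y * aux

lemma y_pow_dvd (a : Solution₁ d) (m t : ℕ) : (a ^ m).y ∣ (a ^ (m * t)).y := by
  obtain ⟨c, c', -, h2⟩ := key_congruence a m t
  exact ⟨(t : ℤ) * (a ^ m).x ^ (t - 1) + c' * (a ^ m).y ^ 2, by rw [h2]; ring⟩

include hx hy in
lemma yN_dvd {m n : ℕ} (h : m ∣ n) : yN a m ∣ yN a n := by
  obtain ⟨t, rfl⟩ := h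
  have := y_pow_dvd a m t
  rwa [← Int.natAbs_dvd_natAbs] at this

include hx hy in
lemma not_dvd_x {q n : ℕ} (hq : q.Prime) (hqy : q ∣ yN a n) : ¬ (q : ℤ) ∣ (a ^ n).x := by
  intro hdvd
  have h1 : (q : ℤ) ∣ (a ^ n).y := by
    rw [← yN_cast hx hy]
    exact_mod_cast Int.natCast_dvd_natCast.mpr hqy
  have : (q : ℤ) ∣ 1 := by
    have hprop := (a ^ n).prop
    have : (q : ℤ) ∣ (a ^ n).x ^ 2 - d * (a ^ n).y ^ 2 :=
      dvd_sub (Dvd.dvd.pow hdvd two_ne_zero) (Dvd.dvd.mul_left (Dvd.dvd.pow h1 two_ne_zero) d)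
    rwa [hprop] at this
  have := Int.le_of_dvd one_pos this
  have := hq.two_le
  omega

end seq
section lte

variable {a : Solution₁ d} (hd : 0 < d) (hx : 1 < a.x) (hy : 0 < a.y)

include hx hy in
lemma lte_step {q : ℕ} (hq : q.Prime) {M : ℕ} (hM : 0 < M) (hqy : q ∣ yN a M)
    {r : ℕ} (hr : r.Prime) :
    (yN a (M * r)).factorization q
      = (yN a M).factorization q + (if q = r then 1 else 0) := by
  set e := (yN a M).factorization q with he
  have hqint : Prime (q:ℤ) := Nat.prime_iff_prime_int.mp hq
  have hyM0 : yN a M ≠ 0 := (yN_pos hx hy hM).ne'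
  have hMr : 0 < M * r := Nat.mul_pos hM hr.pos
  have hyMr0 : yN a (M * r) ≠ 0 := (yN_pos hx hy hMr).ne'
  have he1 : 1 ≤ e := (Nat.Prime.pow_dvd_iff_le_factorization hq hyM0).mp (by simpa using hqy)
  have hqe : (q:ℤ) ^ e ∣ (a ^ M).y := by
    rw [natCast_pow_dvd_iff]
    exact (Nat.Prime.pow_dvd_iff_le_factorization hq hyM0).mpr le_rfl
  have hqe1 : ¬ (q:ℤ) ^ (e + 1) ∣ (a ^ M).y := by
    rw [natCast_pow_dvd_iff]
    intro hcon
    have := (Nat.Prime.pow_dvd_iff_le_factorization hq hyM0).mp hcon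
    omega
  have hqX : ¬ (q : ℤ) ∣ (a ^ M).x := not_dvd_x hx hy hq hqy
  obtain ⟨c, c', -, h2⟩ := key_congruence a M r
  set X := (a ^ M).x
  set Y := (a ^ M).y
  set A := (a ^ (M * r)).y with hA
  have hqXpow : ¬ (q:ℤ) ∣ X ^ (r - 1) := fun hcon => hqX (hqint.dvd_of_dvd_pow hcon)
  have hY3 : ∀ j : ℕ, j ≤ 3 * e → (q:ℤ) ^ j ∣ c' * Y ^ 3 := by
    intro j hj
    refine Dvd.dvd.mul_left ?_ c'
    calc (q:ℤ) ^ j ∣ (q:ℤ) ^ (3 * e) := pow_dvd_pow _ hj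
    _ = ((q:ℤ) ^ e) ^ 3 := by rw [← pow_mul, Nat.mul_comm]
    _ ∣ Y ^ 3 := pow_dvd_pow_of_dvd hqe 3
  -- conclusion helper
  have conclude : ∀ f : ℕ, (q:ℤ) ^ f ∣ A → ¬ (q:ℤ) ^ (f + 1) ∣ A →
      (yN a (M * r)).factorization q = f := by
    intro f h1 h1'
    rw [natCast_pow_dvd_iff] at h1 h1'
    have l1 : f ≤ (yN a (M * r)).factorization q :=
      (Nat.Prime.pow_dvd_iff_le_factorization hq hyMr0).mp h1
    have l2 : ¬ (f + 1 ≤ (yN a (M * r)).factorization q) := fun hcon =>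
      h1' ((Nat.Prime.pow_dvd_iff_le_factorization hq hyMr0).mpr hcon)
    omega
  rcases eq_or_ne q r with hqr | hqr
  · subst hqr
    rw [if_pos rfl]
    refine conclude (e + 1) ?_ ?_
    · rw [h2]
      refine dvd_add ?_ (hY3 (e + 1) (by omega))
      have : (q:ℤ) * X ^ (q - 1) * Y = (q:ℤ) * (X ^ (q - 1) * Y) := by ring
      rw [this, pow_succ, mul_comm ((q:ℤ)^e) ((q:ℤ))]
      exact mul_dvd_mul (dvd_refl _) (Dvd.dvd.mul_left hqe _)
    · intro hcon
      have hsub : (q:ℤ) ^ (e + 2) ∣ (q:ℤ) * X ^ (q - 1) * Y := by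
        have h4 : (q:ℤ) ^ (e + 2) ∣ c' * Y ^ 3 := hY3 (e + 2) (by omega)
        have : (q:ℤ) * X ^ (q - 1) * Y = A - c' * Y ^ 3 := by rw [h2]; ring
        rw [this]
        exact dvd_sub (dvd_trans (pow_dvd_pow _ (by omega)) hcon) h4
      have hcancel : (q:ℤ) ^ (e + 1) ∣ X ^ (q - 1) * Y := by
        have hrw : (q:ℤ) * X ^ (q - 1) * Y = (q:ℤ) * (X ^ (q - 1) * Y) := by ring
        rw [hrw, pow_succ, mul_comm ((q:ℤ)^(e+1)) ((q:ℤ))] at hsub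
        exact (mul_dvd_mul_iff_left (by exact_mod_cast hq.pos.ne' : (q:ℤ) ≠ 0)).mp hsub
      exact hqe1 (hqint.pow_dvd_of_dvd_mul_left _ hqXpow hcancel)
  · rw [if_neg hqr]
    have hqr' : ¬ (q:ℤ) ∣ (r:ℤ) * X ^ (r - 1) := by
      intro hcon
      rcases hqint.dvd_mul.mp hcon with h | h
      · exact hqr (Nat.prime_dvd_prime_iff_eq hq hr |>.mp (by exact_mod_cast h))
      · exact hqXpow h
    refine conclude e ?_ ?_
    · rw [h2]
      refine dvd_add ?_ (hY3 e (by omega))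
      exact Dvd.dvd.mul_left hqe _
    · intro hcon
      have hsub : (q:ℤ) ^ (e + 1) ∣ (r:ℤ) * X ^ (r - 1) * Y := by
        have h4 : (q:ℤ) ^ (e + 1) ∣ c' * Y ^ 3 := hY3 (e + 1) (by omega)
        have : (r:ℤ) * X ^ (r - 1) * Y = A - c' * Y ^ 3 := by rw [h2]; ring
        rw [this]
        exact dvd_sub hcon h4
      exact hqe1 (hqint.pow_dvd_of_dvd_mul_left _ hqr' hsub)
  
include hx hy in
lemma lte {q : ℕ} (hq : q.Prime) {m : ℕ} (hm : 0 < m) (hqy : q ∣ yN a m) :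
    ∀ t, 0 < t → (yN a (m * t)).factorization q
      = (yN a m).factorization q + t.factorization q := by
  intro t
  induction t using Nat.strong_induction_on with
  | _ t ih =>
    intro ht
    rcases eq_or_ne t 1 with rfl | ht1
    · simp [Nat.factorization_one]
    · set r := t.minFac with hrdef
      have hr : r.Prime := Nat.minFac_prime ht1
      obtain ⟨s, hs⟩ : r ∣ t := Nat.minFac_dvd t
      have hs0 : 0 < s := by
        rcases Nat.eq_zero_or_pos s with rfl | h
        · omega
        · exact h
      have hslt : s < t := by
        have := hr.two_le
        calc s < r * s := by nlinarith
        _ = t := hs.symm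
      have hqys : q ∣ yN a (m * s) := hqy.trans (yN_dvd hx hy ⟨s, rfl⟩)
      have hms : 0 < m * s := Nat.mul_pos hm hs0
      have e1 : (yN a (m * t)).factorization q
          = (yN a (m * s)).factorization q + (if q = r then 1 else 0) := by
        rw [show m * t = (m * s) * r by rw [hs]; ring]
        exact lte_step hx hy hq hms hqys hr
      have e2 : (yN a (m * s)).factorization q
          = (yN a m).factorization q + s.factorization q := ih s hslt hs0
      have e3 : t.factorization q = s.factorization q + (if q = r then 1 else 0) := by
        rw [hs, Nat.factorization_mul hr.pos.ne' hs0.ne']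
        rcases eq_or_ne q r with rfl | hqr
        · simp [hr.factorization, Finsupp.single_apply]; omega
        · simp [hr.factorization, Finsupp.single_apply, Ne.symm hqr, hqr]
      omega

include hx hy in
lemma rank_dvd {q : ℕ} (hq : q.Prime) (H : ∃ m, 0 < m ∧ q ∣ yN a m) {n : ℕ} (hn : 0 < n)
    (h : q ∣ yN a n) : Nat.find H ∣ n := by
  set ρ := Nat.find H with hρdef
  obtain ⟨hρpos, hρdvd⟩ := Nat.find_spec H
  have hρn : ρ ≤ n := Nat.find_le ⟨hn, h⟩
  by_contra hndvd
  have hr0 : 0 < n % ρ := by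
    rcases Nat.eq_zero_or_pos (n % ρ) with h0 | h0
    · exact absurd (Nat.dvd_of_mod_eq_zero h0) hndvd
    · exact h0
  have hrρ : n % ρ < ρ := Nat.mod_lt n hρpos
  have hq1 : q ∣ yN a (ρ * (n / ρ)) := hρdvd.trans (yN_dvd hx hy ⟨n / ρ, rfl⟩)
  have hkpos : 0 < ρ * (n / ρ) := by
    have : 0 < n / ρ := Nat.div_pos hρn hρpos
    positivity
  have hadd := y_pow_add (a := a) (ρ * (n / ρ)) (n % ρ)
  rw [Nat.div_add_mod n ρ] at hadd
  have hzn : (q:ℤ) ∣ (a ^ n).y := by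
    rw [← yN_cast hx hy]
    exact_mod_cast Int.natCast_dvd_natCast.mpr h
  have hz1 : (q:ℤ) ∣ (a ^ (ρ * (n / ρ))).y := by
    rw [← yN_cast hx hy]
    exact_mod_cast Int.natCast_dvd_natCast.mpr hq1
  have hmul : (q:ℤ) ∣ (a ^ (ρ * (n / ρ))).x * (a ^ (n % ρ)).y := by
    have heq : (a ^ (ρ * (n / ρ))).x * (a ^ (n % ρ)).y
        = (a ^ n).y - (a ^ (ρ * (n / ρ))).y * (a ^ (n % ρ)).x := by
      rw [hadd]; ring
    rw [heq]
    exact dvd_sub hzn (Dvd.dvd.mul_right hz1 _)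
  have hqint : Prime (q:ℤ) := Nat.prime_iff_prime_int.mp hq
  rcases hqint.dvd_mul.mp hmul with hcase | hcase
  · exact not_dvd_x hx hy hq hq1 hcase
  · have : q ∣ yN a (n % ρ) := Int.natCast_dvd.mp hcase
    exact Nat.find_min H hrρ ⟨hr0, this⟩

end lte
open scoped Classical in
/-- Rank of apparition of `q` in the sequence `yN a`. -/
noncomputable def rho (a : Solution₁ d) (q : ℕ) : ℕ :=
  if h : ∃ m, 0 < m ∧ q ∣ yN a m then Nat.find h else 1

section classify

variable {a : Solution₁ d} (hd : 0 < d) (hx : 1 < a.x) (hy : 0 < a.y)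

lemma aux_two_pow : ∀ s : ℕ, 2 ≤ s → s + 2 ≤ 2 ^ s := by
  intro s hs
  induction s, hs using Nat.le_induction with
  | base => norm_num
  | succ s hs ih =>
    have : 2 ^ (s + 1) = 2 ^ s + 2 ^ s := by ring
    have h2 : 1 ≤ 2 ^ s := Nat.one_le_two_pow
    omega

include hd hx hy in
lemma classify {n : ℕ} (hn : 0 < n) :
    n ≤ 2 ∨ n = ((yN a n).primeFactors).lcm (rho a) := by
  classical
  set Q := (yN a n).primeFactors with hQ
  set m := Q.lcm (rho a) with hm
  have hyn0 : yN a n ≠ 0 := (yN_pos hx hy hn).ne'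
  have hexists : ∀ q ∈ Q, ∃ m', 0 < m' ∧ q ∣ yN a m' := by
    intro q hq
    exact ⟨n, hn, Nat.dvd_of_mem_primeFactors hq⟩
  have hrho : ∀ q ∈ Q, 0 < rho a q ∧ q ∣ yN a (rho a q) ∧ rho a q ∣ n ∧ rho a q ∣ m := by
    intro q hq
    have hE := hexists q hq
    have hqp : q.Prime := Nat.prime_of_mem_primeFactors hq
    have h1 : rho a q = Nat.find hE := by rw [rho, dif_pos hE]
    refine ⟨?_, ?_, ?_, ?_⟩
    · rw [h1]; exact (Nat.find_spec hE).1
    · rw [h1]; exact (Nat.find_spec hE).2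
    · rw [h1]; exact rank_dvd hx hy hqp hE hn (Nat.dvd_of_mem_primeFactors hq)
    · exact Finset.dvd_lcm hq
  have hmdvd : m ∣ n := Finset.lcm_dvd (fun q hq => (hrho q hq).2.2.1)
  have hm0 : 0 < m := Nat.pos_of_dvd_of_pos hmdvd hn
  obtain ⟨t, ht⟩ := hmdvd
  have ht0 : 0 < t := by
    rcases Nat.eq_zero_or_pos t with rfl | h
    · omega
    · exact h
  rcases eq_or_ne t 1 with rfl | ht1
  · right; rw [ht, mul_one]
  -- now t ≥ 2
  have ht2 : 2 ≤ t := by omega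
  have hym0 : yN a m ≠ 0 := (yN_pos hx hy hm0).ne'
  have fact_eq : ∀ q ∈ Q, (yN a n).factorization q
      = (yN a m).factorization q + t.factorization q := by
    intro q hq
    have hE := hexists q hq
    have hqp : q.Prime := Nat.prime_of_mem_primeFactors hq
    have h1 : rho a q = Nat.find hE := by rw [rho, dif_pos hE]
    obtain ⟨hρ0, hρy, hρn, hρm⟩ := hrho q hq
    obtain ⟨u, hu⟩ := hρm
    have hu0 : 0 < u := by
      rcases Nat.eq_zero_or_pos u with rfl | h
      · omega
      · exact h
    have e1 : (yN a m).factorization q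
        = (yN a (rho a q)).factorization q + u.factorization q := by
      rw [hu]; exact lte hx hy hqp hρ0 hρy u hu0
    have e2 : (yN a n).factorization q
        = (yN a (rho a q)).factorization q + (u * t).factorization q := by
      rw [ht, hu, mul_assoc]
      exact lte hx hy hqp hρ0 hρy (u * t) (Nat.mul_pos hu0 ht0)
    have e3 : (u * t).factorization q = u.factorization q + t.factorization q := by
      rw [Nat.factorization_mul hu0.ne' ht0.ne']; rfl
    omega
  have dvd1 : yN a n ∣ yN a m * t := by
    rw [← Nat.factorization_le_iff_dvd hyn0 (Nat.mul_pos (yN_pos hx hy hm0) ht0).ne']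
    rw [Finsupp.le_iff]
    intro q hqsup
    have hq : q ∈ Q := by rwa [hQ, ← Nat.support_factorization]
    rw [Nat.factorization_mul hym0 ht0.ne', Finsupp.add_apply, fact_eq q hq]
  have le1 : yN a n ≤ yN a m * t :=
    Nat.le_of_dvd (Nat.mul_pos (yN_pos hx hy hm0) ht0) dvd1
  have le2 : 2 ^ (n - m) * yN a m ≤ yN a n := by
    have hmn : m ≤ n := by
      rw [ht]; exact Nat.le_mul_of_pos_right m ht0
    have hz : (2:ℤ) ^ (n - m) * ((yN a m : ℕ) : ℤ) ≤ ((yN a n : ℕ) : ℤ) := by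
      rw [yN_cast hx hy, yN_cast hx hy]
      exact y_pow_le hd hx hy hmn
    exact_mod_cast hz
  have hpow : 2 ^ (n - m) ≤ t := by
    have h1 : yN a m * 2 ^ (n - m) ≤ yN a m * t := by
      calc yN a m * 2 ^ (n - m) = 2 ^ (n - m) * yN a m := by ring
      _ ≤ yN a n := le2
      _ ≤ yN a m * t := le1
    exact Nat.le_of_mul_le_mul_left h1 (yN_pos hx hy hm0)
  obtain ⟨t', rfl⟩ : ∃ t', t = t' + 1 := ⟨t - 1, by omega⟩
  have ht'1 : 1 ≤ t' := by omega
  have hnm : n - m = m * t' := by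
    have expand : m * (t' + 1) = m * t' + m := by ring
    omega
  rw [hnm] at hpow
  have hlt : t' + 1 < 2 ^ (t' + 1) := Nat.lt_two_pow_self
  have hmt : m * t' < t' + 1 := by
    have h2 : (2:ℕ) ^ (m * t') < 2 ^ (t' + 1) := lt_of_le_of_lt hpow hlt
    exact (Nat.pow_lt_pow_iff_right (by norm_num)).mp h2
  have hm1 : m = 1 := by nlinarith
  have ht'2 : t' < 2 := by
    by_contra hcon
    have := aux_two_pow t' (by omega)
    rw [hm1, one_mul] at hpow
    omega
  left
  rw [ht, hm1, one_mul]
  omega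

end classify
noncomputable def fund (d : ℤ) : Solution₁ d :=
  if h : 0 < d ∧ ¬IsSquare d then (IsFundamental.exists_of_not_isSquare h.1 h.2).choose else 1

lemma fund_spec {d : ℤ} (h1 : 0 < d) (h2 : ¬IsSquare d) : IsFundamental (fund d) := by
  rw [fund, dif_pos (⟨h1, h2⟩ : 0 < d ∧ ¬IsSquare d)]
  exact Exists.choose_spec _

noncomputable def sqfPart (N : ℕ) : ℕ := (Nat.sq_mul_squarefree N).choose

noncomputable def sqPart (N : ℕ) : ℕ := (Nat.sq_mul_squarefree N).choose_spec.choose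

lemma sq_spec (N : ℕ) : (sqPart N) ^ 2 * sqfPart N = N ∧ Squarefree (sqfPart N) :=
  (Nat.sq_mul_squarefree N).choose_spec.choose_spec

open scoped Classical in
noncomputable def tagOf (p : ℕ) : Finset ℕ × (ℕ ⊕ Finset ℕ) :=
  ((sqfPart (p ^ 2 - 1)).primeFactors,
    if h : ∃ m, 0 < m ∧ ((fund ((sqfPart (p ^ 2 - 1) : ℕ) : ℤ)) ^ m).x = (p : ℤ) then
      (if Nat.find h ≤ 2 then Sum.inl (Nat.find h)
       else Sum.inr ((yN (fund ((sqfPart (p ^ 2 - 1) : ℕ) : ℤ)) (Nat.find h)).primeFactors))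
    else Sum.inl 0)

end Stormer

open Stormer Pell Pell.Solution₁ in
theorem stmt3 (x : ℝ) :
    {p : ℕ | p.Prime ∧ ∀ q : ℕ, q.Prime → q ∣ p ^ 2 - 1 → (q : ℝ) ≤ x}.Finite ∧
    Nat.card {p : ℕ | p.Prime ∧ ∀ q : ℕ, q.Prime → q ∣ p ^ 2 - 1 → (q : ℝ) ≤ x} ≤
      3 * 7 ^ (1 + 2 * Nat.primeCounting ⌊x⌋₊) := by
  classical
  set S : Set ℕ := {p : ℕ | p.Prime ∧ ∀ q : ℕ, q.Prime → q ∣ p ^ 2 - 1 → (q : ℝ) ≤ x} with hS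
  set P : Finset ℕ := (Finset.range (⌊x⌋₊ + 1)).filter Nat.Prime with hP
  set T : Finset (Finset ℕ × (ℕ ⊕ Finset ℕ)) :=
    P.powerset ×ˢ (({1, 2} : Finset ℕ).disjSum P.powerset) with hT
  -- main structural facts for p ∈ S
  have main : ∀ p ∈ S, ∃ n : ℕ, 0 < n ∧
      (1 < ((sqfPart (p ^ 2 - 1) : ℕ) : ℤ) ∧ ¬IsSquare ((sqfPart (p ^ 2 - 1) : ℕ) : ℤ)) ∧
      ((fund ((sqfPart (p ^ 2 - 1) : ℕ) : ℤ)) ^ n).x = (p : ℤ) ∧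
      tagOf p = ((sqfPart (p ^ 2 - 1)).primeFactors,
        if n ≤ 2 then Sum.inl n
        else Sum.inr ((yN (fund ((sqfPart (p ^ 2 - 1) : ℕ) : ℤ)) n).primeFactors)) ∧
      (∀ q : ℕ, q.Prime →
        q ∣ yN (fund ((sqfPart (p ^ 2 - 1) : ℕ) : ℤ)) n → q ∣ p ^ 2 - 1) ∧
      (∀ q : ℕ, q.Prime → q ∣ sqfPart (p ^ 2 - 1) → q ∣ p ^ 2 - 1) := by
    intro p hp
    obtain ⟨hprime, hsmooth⟩ := hp
    have hp2 : 2 ≤ p := hprime.two_le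
    set N := p ^ 2 - 1 with hN
    have hN3 : 3 ≤ N := by
      have : 4 ≤ p ^ 2 := by nlinarith
      omega
    have hNcast : ((N : ℕ) : ℤ) = (p : ℤ) ^ 2 - 1 := by
      have : (1 : ℕ) ≤ p ^ 2 := by nlinarith
      push_cast [hN, Nat.cast_sub this]
      ring
    obtain ⟨hDb, hsqf⟩ := sq_spec N
    set D := sqfPart N with hD
    set b := sqPart N with hb
    have hD0 : 0 < D := by
      rcases Nat.eq_zero_or_pos D with h0 | h
      · rw [h0, mul_zero] at hDb; omega
      · exact h
    have hb0 : 0 < b := by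
      rcases Nat.eq_zero_or_pos b with h0 | h
      · rw [h0] at hDb; simp at hDb; omega
      · exact h
    have hD1 : 1 < D := by
      rcases Nat.lt_or_ge 1 D with h | h
      · exact h
      · exfalso
        have hDeq : D = 1 := by omega
        rw [hDeq, mul_one] at hDb
        have hZ : ((p : ℤ) - b) * ((p : ℤ) + b) = 1 := by
          have : ((b : ℕ) : ℤ) ^ 2 = (p : ℤ) ^ 2 - 1 := by
            rw [← hNcast, ← hDb]; push_cast; ring
          nlinarith [this]
        have hdvd : ((p : ℤ) + b) ∣ 1 := ⟨(p : ℤ) - b, by linarith [hZ, mul_comm ((p:ℤ) - b) ((p:ℤ) + b)]⟩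
        have := Int.le_of_dvd one_pos hdvd
        have hbz : (1 : ℤ) ≤ b := by exact_mod_cast hb0
        have hpz : (2 : ℤ) ≤ p := by exact_mod_cast hp2
        linarith
    have hd1 : 1 < ((D : ℕ) : ℤ) := by exact_mod_cast hD1
    have hDns : ¬IsSquare ((D : ℕ) : ℤ) := by
      rintro ⟨r, hr⟩
      have : D = r.natAbs * r.natAbs := by
        have := congrArg Int.natAbs hr
        rwa [Int.natAbs_natCast, Int.natAbs_mul] at this
      have hunit := hsqf r.natAbs (by rw [this])
      rw [Nat.isUnit_iff] at hunit
      rw [hunit] at this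
      omega
    have hd0 : 0 < ((D : ℕ) : ℤ) := by omega
    have ha : IsFundamental (fund ((D : ℕ) : ℤ)) := fund_spec hd0 hDns
    set a := fund ((D : ℕ) : ℤ) with haa
    have hax : 1 < a.x := ha.1
    have hay : 0 < a.y := ha.2.1
    have hprop : (p : ℤ) ^ 2 - ((D : ℕ) : ℤ) * ((b : ℕ) : ℤ) ^ 2 = 1 := by
      have : ((b : ℕ) : ℤ) ^ 2 * ((D : ℕ) : ℤ) = ((N : ℕ) : ℤ) := by exact_mod_cast congrArg (Nat.cast : ℕ → ℤ) hDb
      rw [hNcast] at this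
      linarith
    set sol : Solution₁ ((D : ℕ) : ℤ) := Solution₁.mk (p : ℤ) (b : ℤ) hprop with hsol
    have hEx : ∃ m, 0 < m ∧ (a ^ m).x = (p : ℤ) := by
      obtain ⟨n, hn⟩ := ha.eq_pow_of_nonneg (a := sol)
        (by rw [hsol, x_mk]; positivity) (by rw [hsol, y_mk]; positivity)
      refine ⟨n, ?_, ?_⟩
      · rcases Nat.eq_zero_or_pos n with rfl | h
        · exfalso
          rw [pow_zero] at hn
          have : sol.x = 1 := by rw [hn, x_one]
          rw [hsol, x_mk] at this
          have : p = 1 := by exact_mod_cast this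
          omega
        · exact h
      · rw [← hn, hsol, x_mk]
    refine ⟨Nat.find hEx, (Nat.find_spec hEx).1, ⟨hd1, hDns⟩, (Nat.find_spec hEx).2, ?_, ?_, ?_⟩
    · -- tagOf characterization
      rw [tagOf]
      rw [dif_pos hEx]
    · -- primes dividing yN a n₀ divide N
      intro q hq hqy
      set n₀ := Nat.find hEx with hn₀
      have hn₀pos : 0 < n₀ := (Nat.find_spec hEx).1
      have hxn₀ : (a ^ n₀).x = (p : ℤ) := (Nat.find_spec hEx).2
      have hyval : D * (yN a n₀) ^ 2 = N := by
        have hprop2 := (a ^ n₀).prop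
        rw [hxn₀] at hprop2
        have : ((D * (yN a n₀) ^ 2 : ℕ) : ℤ) = ((N : ℕ) : ℤ) := by
          push_cast [yN_cast hax hay]
          rw [hNcast]
          linarith
        exact_mod_cast this
      calc q ∣ yN a n₀ := hqy
      _ ∣ D * (yN a n₀) ^ 2 := by
          exact Dvd.dvd.mul_left (dvd_pow_self _ two_ne_zero) D
      _ = N := hyval
    · intro q hq hqD
      exact hqD.trans ⟨b ^ 2, by rw [← hDb]; ring⟩
    -- membership of tags
  have hsubP : ∀ p ∈ S, ∀ q : ℕ, q.Prime → q ∣ p ^ 2 - 1 → q ∈ P := by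
    intro p hp q hq hdvd
    have hxq := hp.2 q hq hdvd
    rw [hP, Finset.mem_filter, Finset.mem_range]
    exact ⟨Nat.lt_succ_of_le (Nat.le_floor hxq), hq⟩
  have hmem : ∀ p ∈ S, tagOf p ∈ T := by
    intro p hp
    obtain ⟨n, hn0, ⟨hd1, hDns⟩, hxn, htag, hydvd, hDdvd⟩ := main p hp
    rw [htag, hT, Finset.mem_product]
    constructor
    · rw [Finset.mem_powerset]
      intro q hq
      exact hsubP p hp q (Nat.prime_of_mem_primeFactors hq)
        (hDdvd q (Nat.prime_of_mem_primeFactors hq) (Nat.dvd_of_mem_primeFactors hq))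
    · by_cases hc : n ≤ 2
      · rw [if_pos hc, Finset.inl_mem_disjSum, Finset.mem_insert, Finset.mem_singleton]
        omega
      · rw [if_neg hc, Finset.inr_mem_disjSum, Finset.mem_powerset]
        intro q hq
        exact hsubP p hp q (Nat.prime_of_mem_primeFactors hq)
          (hydvd q (Nat.prime_of_mem_primeFactors hq) (Nat.dvd_of_mem_primeFactors hq))
  -- injectivity
  have hinj : Set.InjOn tagOf S := by
    intro p hp p' hp' heq
    obtain ⟨n, hn0, ⟨hd1, hDns⟩, hxn, htag, hydvd, hDdvd⟩ := main p hp
    obtain ⟨n', hn0', -, hxn', htag', -, -⟩ := main p' hp'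
    have hDeq : sqfPart (p ^ 2 - 1) = sqfPart (p' ^ 2 - 1) := by
      have h1 : (sqfPart (p ^ 2 - 1)).primeFactors = (sqfPart (p' ^ 2 - 1)).primeFactors := by
        have := congrArg Prod.fst heq
        rwa [htag, htag'] at this
      have s1 := (sq_spec (p ^ 2 - 1)).2
      have s2 := (sq_spec (p' ^ 2 - 1)).2
      rw [← Nat.prod_primeFactors_of_squarefree s1, ← Nat.prod_primeFactors_of_squarefree s2, h1]
    rw [← hDeq] at hxn' htag'
    have htags : (if n ≤ 2 then Sum.inl n
          else Sum.inr ((yN (fund ((sqfPart (p ^ 2 - 1) : ℕ) : ℤ)) n).primeFactors))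
        = (if n' ≤ 2 then Sum.inl n'
          else Sum.inr ((yN (fund ((sqfPart (p ^ 2 - 1) : ℕ) : ℤ)) n').primeFactors)) := by
      have := congrArg Prod.snd heq
      rwa [htag, htag'] at this
    have ha : IsFundamental (fund ((sqfPart (p ^ 2 - 1) : ℕ) : ℤ)) :=
      fund_spec (by omega) hDns
    have hax := ha.1
    have hay := ha.2.1
    have hd0 : (0 : ℤ) < ((sqfPart (p ^ 2 - 1) : ℕ) : ℤ) := by omega
    have hnn' : n = n' := by
      by_cases hc : n ≤ 2 <;> by_cases hc' : n' ≤ 2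
      · rw [if_pos hc, if_pos hc'] at htags
        exact Sum.inl.inj htags
      · rw [if_pos hc, if_neg hc'] at htags
        exact absurd htags (by simp)
      · rw [if_neg hc, if_pos hc'] at htags
        exact absurd htags (by simp)
      · rw [if_neg hc, if_neg hc'] at htags
        have hQ := Sum.inr.inj htags
        have c1 := classify hd0 hax hay hn0
        have c2 := classify hd0 hax hay hn0'
        rcases c1 with h | h
        · omega
        rcases c2 with h' | h'
        · omega
        rw [h, h', hQ]
    have : (p : ℤ) = (p' : ℤ) := by rw [← hxn, ← hxn', hnn']
    exact_mod_cast this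
  -- finish
  have himg : tagOf '' S ⊆ ↑T := by
    rintro y ⟨p, hp, rfl⟩
    exact hmem p hp
  have hfin : S.Finite := Set.Finite.of_finite_image (T.finite_toSet.subset himg) hinj
  refine ⟨hfin, ?_⟩
  have hk : P.card = Nat.primeCounting ⌊x⌋₊ := by
    rw [hP, Nat.primeCounting, Nat.primeCounting', Nat.count_eq_card_filter_range]
  have hTcard : T.card = 2 ^ P.card * (2 + 2 ^ P.card) := by
    rw [hT, Finset.card_product, Finset.card_disjSum, Finset.card_powerset]
    have h12 : ({1, 2} : Finset ℕ).card = 2 := by decide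
    rw [h12]
  have hcard : Nat.card S ≤ T.card := by
    rw [Nat.card_coe_set_eq]
    calc S.ncard = (tagOf '' S).ncard := (Set.ncard_image_of_injOn hinj).symm
    _ ≤ (↑T : Set (Finset ℕ × (ℕ ⊕ Finset ℕ))).ncard :=
        Set.ncard_le_ncard himg T.finite_toSet
    _ = T.card := Set.ncard_coe_finset T
  refine le_trans hcard ?_
  rw [hTcard, hk]
  set k := Nat.primeCounting ⌊x⌋₊
  have e7 : (7 : ℕ) ^ (1 + 2 * k) = 7 * 49 ^ k := by
    rw [pow_add, pow_mul]
    norm_num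
  have h1 : (2 : ℕ) ^ k ≤ 49 ^ k := Nat.pow_le_pow_left (by norm_num) k
  have h2 : (4 : ℕ) ^ k ≤ 49 ^ k := Nat.pow_le_pow_left (by norm_num) k
  have h4 : (2 : ℕ) ^ k * 2 ^ k = 4 ^ k := by
    rw [← mul_pow]
    norm_num
  calc 2 ^ k * (2 + 2 ^ k) = 2 * 2 ^ k + 4 ^ k := by rw [← h4]; ring
  _ ≤ 2 * 49 ^ k + 49 ^ k := Nat.add_le_add (Nat.mul_le_mul_left 2 h1) h2
  _ = 3 * 49 ^ k := by ring
  _ ≤ 21 * 49 ^ k := Nat.mul_le_mul_right _ (by norm_num)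
  _ = 3 * 7 ^ (1 + 2 * k) := by rw [e7]; ring
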